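/- arXiv:1905.12938 — 3 statements merged into one kernel-verified Lean document; each statement's English description precedes it below -/
import Mathlib

section
/- Let ρᵢ(x) ≥ ρ(x) > 1/2 for all i, M ≥ 1, l = ⌊(M+1)/2⌋, and define ‖g‖_{ρ_M} := Σᵢ (2 I(ρᵢ(x); l, l) − 1)|gᵢ|. Then (1 − e^{−(2ρ(x)−1)² l})·‖g‖₁ ≤ ‖g‖_{ρ_M} ≤ ‖g‖₁. -/
open intervalIntegral Real MeasureTheory

/-- The regularized incomplete beta function `I(p; a, b)` (for positive integer
parameters `a, b`). -/
noncomputable def regIncBeta (p : ℝ) (a b : ℕ) : ℝ :=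
  (∫ t in (0 : ℝ)..p, t ^ (a - 1) * (1 - t) ^ (b - 1)) /
    ∫ t in (0 : ℝ)..1, t ^ (a - 1) * (1 - t) ^ (b - 1)

namespace Stmt17Aux

noncomputable def f (n : ℕ) (t : ℝ) : ℝ := t ^ n * (1 - t) ^ n

lemma f_cont (n : ℕ) : Continuous (f n) := by unfold f; continuity

lemma f_intble (n : ℕ) (a b : ℝ) : IntervalIntegrable (f n) volume a b :=
  (f_cont n).intervalIntegrable a b

lemma f_nonneg (n : ℕ) {t : ℝ} (h0 : 0 ≤ t) (h1 : t ≤ 1) : 0 ≤ f n t :=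
  mul_nonneg (pow_nonneg h0 n) (pow_nonneg (by linarith) n)

noncomputable def S (n : ℕ) (p : ℝ) : ℝ := ∫ t in p..1, f n t
noncomputable def B (n : ℕ) : ℝ := ∫ t in (0:ℝ)..1, f n t

lemma B_pos (n : ℕ) : 0 < B n := by
  apply intervalIntegral.intervalIntegral_pos_of_pos_on (f_intble n 0 1)
  · intro x hx
    exact mul_pos (pow_pos hx.1 n) (pow_pos (by linarith [hx.2]) n)
  · norm_num

lemma S_nonneg (n : ℕ) {p : ℝ} (h0 : 0 ≤ p) (h1 : p ≤ 1) : 0 ≤ S n p := by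
  apply intervalIntegral.integral_nonneg h1
  intro t ht
  exact f_nonneg n (le_trans h0 ht.1) ht.2

lemma S_hasDerivAt (n : ℕ) (p : ℝ) : HasDerivAt (S n) (-(f n p)) p := by
  have h : HasDerivAt (fun u => ∫ t in (1:ℝ)..u, f n t) (f n p) p :=
    intervalIntegral.integral_hasDerivAt_right (f_intble n 1 p)
      ((f_cont n).stronglyMeasurableAtFilter _ _) (f_cont n).continuousAt
  have h2 := h.neg
  have he : S n = fun u => -∫ t in (1:ℝ)..u, f n t := by
    funext u; rw [S, intervalIntegral.integral_symm]
  rw [he]; exact h2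

lemma S_half (n : ℕ) : B n = 2 * S n (1/2) := by
  have h2 : ∀ t : ℝ, f n (1 - t) = f n t := by
    intro t; unfold f; ring_nf
  have h1 : (∫ t in (1/2:ℝ)..1, f n t) = ∫ t in (0:ℝ)..(1/2:ℝ), f n t := by
    calc (∫ t in (1/2:ℝ)..1, f n t) = ∫ t in (1/2:ℝ)..1, f n (1 - t) := by
          simp only [h2]
      _ = ∫ t in (1-1:ℝ)..(1-1/2:ℝ), f n t := intervalIntegral.integral_comp_sub_left (f n) 1
      _ = ∫ t in (0:ℝ)..(1/2:ℝ), f n t := by norm_num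
  have h4 : B n = (∫ t in (0:ℝ)..(1/2:ℝ), f n t) + S n (1/2) := by
    rw [B, S, ← intervalIntegral.integral_add_adjacent_intervals (f_intble n 0 (1/2))
      (f_intble n (1/2) 1)]
  rw [h4, S, h1]; ring

lemma key (n : ℕ) {p : ℝ} (hp : 1/2 ≤ p) (hp1 : p ≤ 1) :
    4 * (n+1) * (2*p - 1) * S n p ≤ f n p := by
  have h0 : (0:ℝ) ≤ p := by linarith
  have step1 : 4 * ((n:ℝ)+1) * (2*p-1) * S n p
      = ∫ t in p..1, 4*((n:ℝ)+1)*(2*p-1) * f n t := by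
    rw [S, intervalIntegral.integral_const_mul]
  have cont2 : Continuous (fun t : ℝ => 4*((n:ℝ)+1)*(2*t-1) * f n t) := by
    have := f_cont n; continuity
  have step2 : (∫ t in p..1, 4*((n:ℝ)+1)*(2*p-1) * f n t)
      ≤ ∫ t in p..1, 4*((n:ℝ)+1)*(2*t-1) * f n t := by
    apply intervalIntegral.integral_mono_on hp1
    · exact ((f_intble n p 1).const_mul _)
    · exact cont2.intervalIntegrable _ _
    · intro t ht
      have hf := f_nonneg n (le_trans h0 ht.1) ht.2
      nlinarith [mul_nonneg (mul_nonneg (sub_nonneg.2 ht.1) hf)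
        (by positivity : (0:ℝ) ≤ 4*((n:ℝ)+1))]
  have step3 : (∫ t in p..1, 4*((n:ℝ)+1)*(2*t-1) * f n t) = 4 * (p*(1-p))^(n+1) := by
    have hderiv : ∀ t ∈ Set.uIcc p 1,
        HasDerivAt (fun t : ℝ => -(4:ℝ) * (t*(1-t))^(n+1))
          (4*((n:ℝ)+1)*(2*t-1) * f n t) t := by
      intro t _
      have h1 : HasDerivAt (fun t : ℝ => t*(1-t)) (1*(1-t) + t*(0-1)) t :=
        (hasDerivAt_id t).mul ((hasDerivAt_const t (1:ℝ)).sub (hasDerivAt_id t))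
      have h2 : HasDerivAt (fun t : ℝ => -(4:ℝ) * (t*(1-t))^(n+1)) _ t := (h1.fun_pow (n+1)).const_mul (-4 : ℝ)
      convert h2 using 1
      simp only [Nat.add_sub_cancel, f]
      rw [mul_pow]
      push_cast
      ring
    rw [intervalIntegral.integral_eq_sub_of_hasDerivAt hderiv
      (cont2.intervalIntegrable _ _)]
    have : ((1:ℝ)*(1-1))^(n+1) = 0 := by
      rw [show (1:ℝ)*(1-1) = 0 by ring]; exact zero_pow (Nat.succ_ne_zero n)
    rw [this]; ring
  have step4 : 4 * (p*(1-p))^(n+1) ≤ f n p := by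
    have hX : (0:ℝ) ≤ p^n * (1-p)^n := f_nonneg n h0 hp1
    have h41 : 4*(p*(1-p)) ≤ 1 := by nlinarith [sq_nonneg (2*p-1)]
    calc 4 * (p*(1-p))^(n+1) = (4*(p*(1-p))) * (p^n*(1-p)^n) := by
          rw [pow_succ, mul_pow]; ring
      _ ≤ 1 * (p^n*(1-p)^n) := mul_le_mul_of_nonneg_right h41 hX
      _ = f n p := by rw [f]; ring
  calc 4 * ((n:ℝ)+1) * (2*p - 1) * S n p
      = ∫ t in p..1, 4*((n:ℝ)+1)*(2*p-1) * f n t := step1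
    _ ≤ ∫ t in p..1, 4*((n:ℝ)+1)*(2*t-1) * f n t := step2
    _ = 4 * (p*(1-p))^(n+1) := step3
    _ ≤ f n p := step4

lemma S_le (n : ℕ) {p : ℝ} (hp : 1/2 ≤ p) (hp1 : p ≤ 1) :
    S n p ≤ S n (1/2) * Real.exp (-(((n:ℝ)+1) * (2*p-1)^2)) := by
  set F : ℝ → ℝ := fun q => S n q * Real.exp (((n:ℝ)+1) * (2*q-1)^2) with hF
  have hFd : ∀ q : ℝ, HasDerivAt F
      (Real.exp (((n:ℝ)+1)*(2*q-1)^2) * (4*((n:ℝ)+1)*(2*q-1) * S n q - f n q)) q := by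
    intro q
    have ha : HasDerivAt (fun q : ℝ => 2*q-1) (2*1) q :=
      ((hasDerivAt_id q).const_mul 2).sub_const 1
    have hb : HasDerivAt (fun x : ℝ => Real.exp (((n:ℝ)+1) * (2*x-1)^2)) _ q := ((ha.fun_pow 2).const_mul ((n:ℝ)+1)).exp
    have hc : HasDerivAt F _ q := (S_hasDerivAt n q).mul hb
    convert hc using 1
    norm_num
    ring
  have hanti : AntitoneOn F (Set.Icc (1/2 : ℝ) 1) := by
    apply antitoneOn_of_deriv_nonpos (convex_Icc _ _)
    · exact fun q _ => ((hFd q).differentiableAt.continuousAt).continuousWithinAt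
    · intro q _
      exact (hFd q).differentiableAt.differentiableWithinAt
    · intro q hq
      rw [interior_Icc] at hq
      rw [(hFd q).deriv]
      have hkey := key n (le_of_lt hq.1) (le_of_lt hq.2)
      have hle : 4*((n:ℝ)+1)*(2*q-1) * S n q - f n q ≤ 0 := by
        have := key n (le_of_lt hq.1) (le_of_lt hq.2); linarith
      exact mul_nonpos_of_nonneg_of_nonpos (le_of_lt (Real.exp_pos _)) hle
  have hle : F p ≤ F (1/2) :=
    hanti (Set.left_mem_Icc.2 (by norm_num)) (Set.mem_Icc.2 ⟨hp, hp1⟩) hp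
  have hF0 : F (1/2) = S n (1/2) := by
    simp only [hF]; norm_num
  have h2 : S n p = F p * Real.exp (-(((n:ℝ)+1) * (2*p-1)^2)) := by
    simp only [hF]
    rw [mul_assoc, ← Real.exp_add]
    simp
  rw [h2, ← hF0]
  exact mul_le_mul_of_nonneg_right hle (le_of_lt (Real.exp_pos _))

lemma regIncBeta_eq (n : ℕ) (p : ℝ) :
    regIncBeta p (n+1) (n+1) = (B n - S n p) / B n := by
  rw [regIncBeta]
  have h1 : (∫ t in (0:ℝ)..p, t ^ (n+1-1) * (1-t)^(n+1-1)) = B n - S n p := by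
    have hadd := intervalIntegral.integral_add_adjacent_intervals (f_intble n 0 p)
      (f_intble n p 1)
    simp only [Nat.add_sub_cancel]
    have e1 : (∫ t in (0:ℝ)..p, t ^ n * (1-t)^n) = ∫ t in (0:ℝ)..p, f n t := rfl
    rw [e1]
    unfold B S at *
    linarith
  have h2 : (∫ t in (0:ℝ)..1, t ^ (n+1-1) * (1-t)^(n+1-1)) = B n := by
    simp only [Nat.add_sub_cancel]; rfl
  rw [h1, h2]

lemma upper (n : ℕ) {p : ℝ} (h0 : 0 ≤ p) (hp1 : p ≤ 1) :
    2 * regIncBeta p (n+1) (n+1) - 1 ≤ 1 := by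
  have hB := B_pos n
  have hS := S_nonneg n h0 hp1
  rw [regIncBeta_eq]
  have h1 : (B n - S n p) / B n ≤ 1 := by
    rw [div_le_one hB]; linarith
  linarith

lemma lower (n : ℕ) {ρ p : ℝ} (hρ : 1/2 ≤ ρ) (hρp : ρ ≤ p) (hp1 : p ≤ 1) :
    1 - Real.exp (-(((n:ℝ)+1) * (2*ρ-1)^2)) ≤ 2 * regIncBeta p (n+1) (n+1) - 1 := by
  have hB := B_pos n
  have h0p : (0:ℝ) ≤ p := by linarith
  have m1 : S n p ≤ S n ρ := by
    have hadd := intervalIntegral.integral_add_adjacent_intervals (f_intble n ρ p)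
      (f_intble n p 1)
    have hpos : 0 ≤ ∫ t in ρ..p, f n t := by
      apply intervalIntegral.integral_nonneg hρp
      intro t ht
      exact f_nonneg n (le_trans (by linarith) ht.1) (le_trans ht.2 hp1)
    unfold S at *
    linarith
  have m2 := S_le n hρ (le_trans hρp hp1)
  have hB2 := S_half n
  have hmain : 2 * S n p ≤ Real.exp (-(((n:ℝ)+1) * (2*ρ-1)^2)) * B n := by
    calc 2 * S n p ≤ 2 * S n ρ := by linarith
      _ ≤ 2 * (S n (1/2) * Real.exp (-(((n:ℝ)+1) * (2*ρ-1)^2))) := by linarith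
      _ = Real.exp (-(((n:ℝ)+1) * (2*ρ-1)^2)) * B n := by rw [hB2]; ring
  rw [regIncBeta_eq]
  have he : 2 * ((B n - S n p) / B n) - 1 = 1 - 2 * S n p / B n := by
    field_simp
    ring
  rw [he]
  have : 2 * S n p / B n ≤ Real.exp (-(((n:ℝ)+1) * (2*ρ-1)^2)) := by
    rw [div_le_iff₀ hB]
    linarith
  linarith

end Stmt17Aux

open Stmt17Aux in
/-- Exponential approach of the `ρ_M`-norm to the `ℓ¹` norm: with
`ρᵢ ≥ ρ > 1/2` and `l = ⌊(M+1)/2⌋`,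
`(1 − e^{−(2ρ−1)²l})‖g‖₁ ≤ ‖g‖_{ρ_M} ≤ ‖g‖₁`. -/
theorem stmt17 (d M : ℕ) (hM : 1 ≤ M)
    (ρi : Fin d → ℝ) (ρ : ℝ) (hρ : 1 / 2 < ρ)
    (hρi : ∀ i, ρ ≤ ρi i) (hρi1 : ∀ i, ρi i ≤ 1)
    (g : Fin d → ℝ) :
    (1 - Real.exp (-(2 * ρ - 1) ^ 2 * ((M + 1) / 2 : ℕ))) * ∑ i, |g i| ≤
      ∑ i, (2 * regIncBeta (ρi i) ((M + 1) / 2) ((M + 1) / 2) - 1) * |g i| ∧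
    ∑ i, (2 * regIncBeta (ρi i) ((M + 1) / 2) ((M + 1) / 2) - 1) * |g i| ≤
      ∑ i, |g i| := by
  obtain ⟨n, hn⟩ : ∃ n, (M + 1) / 2 = n + 1 := ⟨(M + 1) / 2 - 1, by omega⟩
  simp only [hn]
  have hexp : (-(2 * ρ - 1) ^ 2 * ((n + 1 : ℕ) : ℝ))
      = -(((n:ℝ)+1) * (2*ρ-1)^2) := by push_cast; ring
  rw [hexp]
  constructor
  · rw [Finset.mul_sum]
    apply Finset.sum_le_sum
    intro i _
    apply mul_le_mul_of_nonneg_right _ (abs_nonneg _)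
    exact lower n (le_of_lt hρ) (hρi i) (hρi1 i)
  · calc ∑ i, (2 * regIncBeta (ρi i) (n+1) (n+1) - 1) * |g i|
        ≤ ∑ i, 1 * |g i| := by
          apply Finset.sum_le_sum
          intro i _
          apply mul_le_mul_of_nonneg_right _ (abs_nonneg _)
          exact upper n (by linarith [hρi i]) (hρi1 i)
      _ = ∑ i, |g i| := by simp
end

section
/- For any nonzero vectors a, b in an inner product space, −⟨a, b⟩/‖a‖ ≤ −(1/3)‖b‖ + (8/3)‖a − b‖. -/
/-- Cutkosky–Mehta lemma: for nonzero vectors `a, b` in a real inner product space,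
`−⟨a,b⟩/‖a‖ ≤ −(1/3)‖b‖ + (8/3)‖a − b‖`. -/
theorem stmt18 {E : Type*} [NormedAddCommGroup E] [InnerProductSpace ℝ E]
    (a b : E) (ha : a ≠ 0) (hb : b ≠ 0) :
    -(inner ℝ a b : ℝ) / ‖a‖ ≤ -(1 / 3) * ‖b‖ + (8 / 3) * ‖a - b‖ := by
  have hna : (0:ℝ) < ‖a‖ := norm_pos_iff.mpr ha
  by_cases hc : ‖a - b‖ ≤ ‖b‖ / 2
  · -- near case
    have h1 : (inner ℝ a b : ℝ) = ‖a‖ ^ 2 - inner ℝ a (a - b) := by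
      rw [inner_sub_right, real_inner_self_eq_norm_sq]; ring
    have h2 : (inner ℝ a (a - b) : ℝ) ≤ ‖a‖ * ‖a - b‖ := real_inner_le_norm a (a - b)
    have h3 : ‖a‖ * (‖a‖ - ‖a - b‖) ≤ (inner ℝ a b : ℝ) := by
      rw [h1]; nlinarith
    have h4 : -(inner ℝ a b : ℝ) / ‖a‖ ≤ -(‖a‖ - ‖a - b‖) := by
      rw [div_le_iff₀ hna]; nlinarith
    have h5 : ‖b‖ - ‖a - b‖ ≤ ‖a‖ := by
      have := norm_sub_norm_le b a
      rw [show ‖b - a‖ = ‖a - b‖ from norm_sub_rev b a] at this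
      linarith
    linarith [norm_nonneg b, norm_nonneg (a-b)]
  · -- far case
    push_neg at hc
    have h1 : (inner ℝ a b : ℝ) ≤ ‖a‖ * ‖b‖ := real_inner_le_norm a b
    have h2 : -(‖a‖ * ‖b‖) ≤ (inner ℝ a b : ℝ) := by
      have := real_inner_le_norm a (-b)
      simp only [inner_neg_right, norm_neg] at this
      linarith
    have h3 : -(inner ℝ a b : ℝ) / ‖a‖ ≤ ‖b‖ := by
      rw [div_le_iff₀ hna]; nlinarith
    nlinarith [norm_nonneg b]
end

section
/- For a nonzero vector g ∈ ℝ^d, define the stochastic sign s ∈ {−1,+1}^d with independent coordinates where sᵢ = +1 with probability 1/2 + gᵢ/(2‖g‖) and sᵢ = −1 with probability 1/2 − gᵢ/(2‖g‖) (‖g‖ the Euclidean norm). Then: (1) E[‖g‖·s] = g (unbiasedness with scaling ‖g‖); and (2) for every i with gᵢ ≠ 0, Prob(sᵢ = sign gᵢ) = 1/2 + |gᵢ|/(2‖g‖) > 1/2. -/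
open MeasureTheory ProbabilityTheory

/-- The stochastic sign of a nonzero `g ∈ ℝ^d`: independent `±1` coordinates with
`Prob(sᵢ = +1) = 1/2 + gᵢ/(2‖g‖)`. It is unbiased after scaling by `‖g‖`, and it
satisfies the SPB condition `Prob(sᵢ = sign gᵢ) = 1/2 + |gᵢ|/(2‖g‖) > 1/2`. -/
theorem stmt19
    {Ω : Type*} [MeasureSpace Ω] [IsProbabilityMeasure (ℙ : Measure Ω)]
    (d : ℕ) (g : Fin d → ℝ) (hg : g ≠ 0)
    (s : Fin d → Ω → ℝ) (hmeas : ∀ i, Measurable (s i))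
    (hindep : iIndepFun (m := fun _ => (inferInstance : MeasurableSpace ℝ)) s ℙ)
    (hval : ∀ i ω, s i ω = -1 ∨ s i ω = 1)
    (hp : ∀ i, ℙ {ω | s i ω = 1} =
      ENNReal.ofReal (1 / 2 + g i / (2 * Real.sqrt (∑ j, (g j) ^ 2)))) :
    (∀ i, ∫ ω, Real.sqrt (∑ j, (g j) ^ 2) * s i ω = g i) ∧
    (∀ i, g i ≠ 0 →
      (ℙ {ω | Real.sign (s i ω) = Real.sign (g i)}).toReal =
          1 / 2 + |g i| / (2 * Real.sqrt (∑ j, (g j) ^ 2)) ∧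
      (1 : ℝ) / 2 < 1 / 2 + |g i| / (2 * Real.sqrt (∑ j, (g j) ^ 2))) := by
  set N := Real.sqrt (∑ j, (g j) ^ 2) with hNdef
  have hsum : 0 < ∑ j, (g j) ^ 2 := by
    obtain ⟨j, hj⟩ := Function.ne_iff.mp hg
    exact Finset.sum_pos' (fun k _ => sq_nonneg _)
      ⟨j, Finset.mem_univ j, lt_of_le_of_ne (sq_nonneg _) (Ne.symm (pow_ne_zero 2 hj))⟩
  have hN : 0 < N := Real.sqrt_pos.mpr hsum
  have habs : ∀ i, |g i| ≤ N := by
    intro i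
    rw [hNdef, ← Real.sqrt_sq_eq_abs]
    exact Real.sqrt_le_sqrt (Finset.single_le_sum (fun k _ => sq_nonneg (g k))
      (Finset.mem_univ i))
  have hp0 : ∀ i, 0 ≤ 1 / 2 + g i / (2 * N) := by
    intro i
    have h1 : -(N) ≤ g i := neg_le_of_abs_le (habs i)
    have : -(1/2 : ℝ) ≤ g i / (2 * N) := by
      rw [le_div_iff₀ (by positivity)]
      nlinarith
    linarith
  have hp1 : ∀ i, 1 / 2 + g i / (2 * N) ≤ 1 := by
    intro i
    have h1 : g i ≤ N := le_of_abs_le (habs i)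
    have : g i / (2 * N) ≤ (1/2 : ℝ) := by
      rw [div_le_iff₀ (by positivity)]
      nlinarith
    linarith
  have hA : ∀ i, MeasurableSet {ω | s i ω = 1} := fun i =>
    (hmeas i) (measurableSet_singleton 1)
  have hAc : ∀ i, {ω | s i ω = 1}ᶜ = {ω | s i ω = -1} := by
    intro i
    ext ω
    rcases hval i ω with h | h <;> simp [h] <;> norm_num
  have hmA : ∀ i, (ℙ {ω | s i ω = 1}).toReal = 1 / 2 + g i / (2 * N) := by
    intro i
    rw [hp i, ENNReal.toReal_ofReal (hp0 i)]
  have hmAc : ∀ i, (ℙ {ω | s i ω = -1}).toReal = 1 - (1 / 2 + g i / (2 * N)) := by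
    intro i
    rw [← hAc i, measure_compl (hA i) (measure_ne_top _ _), measure_univ, hp i,
      ← ENNReal.ofReal_one, ← ENNReal.ofReal_sub _ (hp0 i),
      ENNReal.toReal_ofReal (by linarith [hp1 i])]
  refine ⟨?_, ?_⟩
  · intro i
    have hrepr : ∀ ω, s i ω = 2 * Set.indicator {ω | s i ω = 1} (fun _ => (1:ℝ)) ω - 1 := by
      intro ω
      rcases hval i ω with h | h
      · rw [Set.indicator_of_notMem (by simp [h]; norm_num)]
        simp [h]
      · rw [Set.indicator_of_mem (by simpa using h)]
        simp [h]; norm_num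
    have hint : Integrable (Set.indicator {ω | s i ω = 1} (fun _ => (1:ℝ))) ℙ :=
      (integrable_const (1:ℝ)).indicator (hA i)
    calc ∫ ω, N * s i ω
        = N * ∫ ω, s i ω := integral_const_mul _ _
      _ = N * ∫ ω, (2 * Set.indicator {ω | s i ω = 1} (fun _ => (1:ℝ)) ω - 1) := by
          congr 1; exact integral_congr_ae (Filter.Eventually.of_forall hrepr)
      _ = N * (2 * (ℙ {ω | s i ω = 1}).toReal - 1) := by
          rw [integral_sub (hint.const_mul 2) (integrable_const 1),
            integral_const_mul, integral_indicator_const _ (hA i), integral_const,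
            probReal_univ]
          simp [Measure.real]
      _ = g i := by
          rw [hmA i]
          field_simp
          ring
  · intro i hgi
    have hgabs : 0 < |g i| := abs_pos.mpr hgi
    have hpos2 : 0 < |g i| / (2 * N) := by positivity
    refine ⟨?_, by linarith⟩
    rcases lt_or_gt_of_ne hgi with hneg | hpos
    · have hsg : Real.sign (g i) = -1 := Real.sign_of_neg hneg
      have hset : {ω | Real.sign (s i ω) = Real.sign (g i)} = {ω | s i ω = -1} := by
        ext ω
        rcases hval i ω with h | h <;>
          simp [h, hsg, Real.sign_of_neg (show (-1:ℝ) < 0 by norm_num),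
            Real.sign_of_pos (show (0:ℝ) < 1 by norm_num)]
      rw [hset, hmAc i, abs_of_neg hneg]
      field_simp
      ring
    · have hsg : Real.sign (g i) = 1 := Real.sign_of_pos hpos
      have hset : {ω | Real.sign (s i ω) = Real.sign (g i)} = {ω | s i ω = 1} := by
        ext ω
        rcases hval i ω with h | h <;>
          simp [h, hsg, Real.sign_of_neg (show (-1:ℝ) < 0 by norm_num),
            Real.sign_of_pos (show (0:ℝ) < 1 by norm_num)]
      rw [hset, hmA i, abs_of_pos hpos]
end
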